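/- Let p be a prime, n a positive integer, and 1 ≤ m ≤ n−1. For a function f : 𝔽_p^n → 𝔽_p, the polynomial z^{p^m} − 1 divides the associated polynomial F(z) in ℂ[z] if and only if f is balanced on every fiber obtained by fixing the first m variables; that is, for every (a_1,...,a_m) ∈ 𝔽_p^m and every t ∈ 𝔽_p, #{x ∈ 𝔽_p^n : f(x) = t and x_i = a_i for 1 ≤ i ≤ m} = p^{n−m−1}. -/
import Mathlib


/-- `ω = exp(2π√-1/p)`, a primitive `p`-th root of unity in `ℂ`. -/
noncomputable def omegaC (p : ℕ) : ℂ := Complex.exp (2 * Real.pi * Complex.I / p)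

/-- `ξ = exp(2π√-1/pⁿ)`, a primitive `pⁿ`-th root of unity in `ℂ`. -/
noncomputable def xiC (p n : ℕ) : ℂ := Complex.exp (2 * Real.pi * Complex.I / (p ^ n : ℕ))

/-- The integer `k = Σ_{i=1}^n x_i p^{i-1}` whose `p`-adic digits are `x₁,…,xₙ`
(0-indexed here). -/
def idx {p n : ℕ} (x : Fin n → ZMod p) : ℕ := ∑ i : Fin n, (x i).val * p ^ (i : ℕ)

/-- The associated polynomial `F(z) = Σ_{k=0}^{pⁿ-1} ω^{f(k)} z^k
  = Σ_{x ∈ 𝔽ₚⁿ} ω^{f(x)} z^{idx x} ∈ ℂ[z]`. -/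
noncomputable def assocPoly {p n : ℕ} [NeZero p] (f : (Fin n → ZMod p) → ZMod p) :
    Polynomial ℂ :=
  ∑ x : Fin n → ZMod p, Polynomial.monomial (idx x) (omegaC p ^ (f x).val)

/-- Discrete Fourier transform over ℂ: `𝔉_f(j) = Σ_{k=0}^{pⁿ-1} ω^{f(k)} ξ^{-kj}`. -/
noncomputable def dft {p n : ℕ} [NeZero p] (f : (Fin n → ZMod p) → ZMod p) (j : ℕ) : ℂ :=
  ∑ x : Fin n → ZMod p, omegaC p ^ (f x).val * xiC p n ^ (-((idx x * j : ℕ) : ℤ))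

/-- `f` is `m`-th order correlation-immune: for every `m`-subset `S` of the variable
indices, every assignment `a` of values on `S` and every `t`,
`p^m ⬝ #{x : f x = t ∧ x∣_S = a∣_S} = #{x : f x = t}`. -/
def CorrImmune {p n : ℕ} [NeZero p] (f : (Fin n → ZMod p) → ZMod p) (m : ℕ) : Prop :=
  ∀ S : Finset (Fin n), S.card = m → ∀ a : Fin n → ZMod p, ∀ t : ZMod p,
    p ^ m * (Finset.univ.filter fun x : Fin n → ZMod p =>
        f x = t ∧ ∀ i ∈ S, x i = a i).card
      = (Finset.univ.filter fun x : Fin n → ZMod p => f x = t).card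

/-- `f` is balanced: every output value is attained exactly `p^{n-1}` times. -/
def IsBalanced {p n : ℕ} [NeZero p] (f : (Fin n → ZMod p) → ZMod p) : Prop :=
  ∀ t : ZMod p,
    (Finset.univ.filter fun x : Fin n → ZMod p => f x = t).card = p ^ (n - 1)

/-- `f` is `m`-resilient: `m`-th order correlation-immune and balanced. -/
def Resilient {p n : ℕ} [NeZero p] (f : (Fin n → ZMod p) → ZMod p) (m : ℕ) : Prop :=
  CorrImmune f m ∧ IsBalanced f


section AuxLemmas
open Polynomial Finset


variable {p : ℕ}

lemma idx_succ {n : ℕ} (x : Fin (n+1) → ZMod p) :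
    idx x = (x 0).val + p * idx (fun i : Fin n => x i.succ) := by
  unfold idx
  rw [Fin.sum_univ_succ, Finset.mul_sum]
  simp only [Fin.val_zero, pow_zero, mul_one, Fin.val_succ]
  congr 1
  refine Finset.sum_congr rfl fun i _ => ?_
  ring

lemma idx_lt [NeZero p] : ∀ {n : ℕ} (x : Fin n → ZMod p), idx x < p ^ n := by
  intro n
  induction n with
  | zero => intro x; simp [idx]
  | succ n ih =>
    intro x
    rw [idx_succ]
    have h0 : (x 0).val < p := ZMod.val_lt _
    have h1 := ih (fun i => x i.succ)
    have h2 : p * (idx (fun i => x i.succ)) + p ≤ p * p ^ n := by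
      have h3 := Nat.mul_le_mul_left p (Nat.succ_le_of_lt h1)
      rwa [Nat.mul_succ] at h3
    rw [Nat.mul_comm p (p ^ n)] at h2
    rw [pow_succ]
    omega

lemma idx_inj [NeZero p] : ∀ {n : ℕ} (x y : Fin n → ZMod p), idx x = idx y → x = y := by
  intro n
  induction n with
  | zero => intro x y _; funext i; exact i.elim0
  | succ n ih =>
    intro x y h
    rw [idx_succ, idx_succ] at h
    have hx0 : (x 0).val < p := ZMod.val_lt _
    have hy0 : (y 0).val < p := ZMod.val_lt _
    have h0 : (x 0).val = (y 0).val := by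
      have := congrArg (· % p) h
      simpa [Nat.add_mul_mod_self_left, Nat.mod_eq_of_lt hx0, Nat.mod_eq_of_lt hy0] using this
    have hp : 0 < p := Nat.pos_of_ne_zero (NeZero.ne p)
    have ht : (fun i : Fin n => x i.succ) = fun i => y i.succ :=
      ih _ _ (Nat.eq_of_mul_eq_mul_left hp (by omega))
    funext i
    refine Fin.cases ?_ ?_ i
    · exact ZMod.val_injective p h0
    · intro j; exact congrFun ht j

lemma idx_split {n m : ℕ} (h : m ≤ n) (x : Fin n → ZMod p) :
    ∃ c, idx x = idx (fun i : Fin m => x (Fin.castLE h i)) + p ^ m * c := by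
  classical
  set F : ℕ → ℕ := fun i => if hi : i < n then (x ⟨i, hi⟩).val * p ^ i else 0 with hF
  have h1 : idx x = ∑ i ∈ Finset.range n, F i := by
    rw [← Fin.sum_univ_eq_sum_range]
    exact Finset.sum_congr rfl fun i _ => by simp [hF, i.isLt]
  have h2 : idx (fun i : Fin m => x (Fin.castLE h i)) = ∑ i ∈ Finset.range m, F i := by
    rw [← Fin.sum_univ_eq_sum_range]
    refine Finset.sum_congr rfl fun i _ => ?_
    have hi : (i : ℕ) < n := lt_of_lt_of_le i.isLt h
    simp only [hF, hi, dif_pos]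
    rfl
  set G : ℕ → ℕ := fun i => if hi : i < n then (x ⟨i, hi⟩).val * p ^ (i - m) else 0 with hG
  have h3 : ∀ i ∈ Finset.Ico m n, F i = p ^ m * G i := by
    intro i hi
    simp only [Finset.mem_Ico] at hi
    simp only [hF, hG, hi.2, dif_pos]
    have hpow : p ^ (i : ℕ) = p ^ m * p ^ (i - m) := by
      rw [← pow_add, Nat.add_sub_cancel' hi.1]
    rw [hpow]; ring
  refine ⟨∑ i ∈ Finset.Ico m n, G i, ?_⟩
  rw [h1, h2, Finset.range_eq_Ico, ← Finset.sum_Ico_consecutive F (Nat.zero_le m) h,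
    ← Finset.range_eq_Ico, Finset.mul_sum]
  congr 1
  exact Finset.sum_congr rfl h3

lemma fiber_card [NeZero p] {n m : ℕ} (h : m ≤ n) (a : Fin m → ZMod p) :
    (Finset.univ.filter fun x : Fin n → ZMod p =>
      ∀ i : Fin m, x (Fin.castLE h i) = a i).card = p ^ (n - m) := by
  classical
  have key : (Finset.univ.filter fun x : Fin n → ZMod p =>
      ∀ i : Fin m, x (Fin.castLE h i) = a i).card
      = (Finset.univ : Finset (Fin (n - m) → ZMod p)).card := by
    refine Finset.card_bij' (fun x _ => fun j : Fin (n - m) => x ⟨m + j, by omega⟩)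
      (fun y _ => fun i : Fin n =>
        if hi : (i : ℕ) < m then a ⟨i, hi⟩ else y ⟨(i : ℕ) - m, by omega⟩)
      (fun x hx => Finset.mem_univ _) ?_ ?_ ?_
    · intro y _
      simp only [Finset.mem_filter, Finset.mem_univ, true_and]
      intro i
      have hi : ((Fin.castLE h i : Fin n) : ℕ) < m := i.isLt
      simp only [hi, dif_pos]
      exact congrArg a (Fin.ext rfl)
    · intro x hx
      simp only [Finset.mem_filter, Finset.mem_univ, true_and] at hx
      funext i
      by_cases hi : (i : ℕ) < m
      · simp only [dif_pos hi]
        rw [← hx ⟨(i : ℕ), hi⟩]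
        exact congrArg x (Fin.ext rfl)
      · simp only [dif_neg hi]
        exact congrArg x (Fin.ext (show m + ((i : ℕ) - m) = (i : ℕ) by omega))
    · intro y _
      funext j
      have hj : ¬ ((m : ℕ) + (j : ℕ) < m) := by omega
      simp only [hj, dif_neg]
      exact congrArg y (Fin.ext (show m + (j : ℕ) - m = (j : ℕ) by omega))
  rw [key, Finset.card_univ, Fintype.card_fun, ZMod.card, Fintype.card_fin]

lemma zmod_sum_val [NeZero p] {M : Type*} [AddCommMonoid M] (g : ℕ → M) :
    ∑ t : ZMod p, g t.val = ∑ i ∈ Finset.range p, g i := by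
  refine Finset.sum_nbij' (fun t => t.val) (fun i => (i : ZMod p))
    (fun t _ => Finset.mem_range.mpr (ZMod.val_lt t)) (fun i _ => Finset.mem_univ _)
    (fun t _ => ZMod.natCast_rightInverse t)
    (fun i hi => ZMod.val_cast_of_lt (Finset.mem_range.mp hi)) (fun t _ => rfl)

lemma sum_omega_eq_zero_iff (p : ℕ) [hp : Fact p.Prime] [NeZero p] (c : ZMod p → ℕ) :
    ∑ t : ZMod p, (c t : ℂ) * omegaC p ^ (t.val) = 0 ↔ ∀ t, c t = c 0 := by
  classical
  have hp0 : p ≠ 0 := hp.out.ne_zero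
  have hprim : IsPrimitiveRoot (omegaC p) p := Complex.isPrimitiveRoot_exp p hp0
  constructor
  · intro hsum
    set Q : Polynomial ℚ := ∑ t : ZMod p, Polynomial.C (c t : ℚ) * Polynomial.X ^ (t.val)
      with hQdef
    have hcoeff : ∀ t : ZMod p, Q.coeff t.val = (c t : ℚ) := by
      intro t
      rw [hQdef, Polynomial.finset_sum_coeff]
      rw [Finset.sum_eq_single t]
      · simp [Polynomial.coeff_C_mul, Polynomial.coeff_X_pow]
      · intro s _ hst
        have hv : t.val ≠ s.val := fun hv => hst (ZMod.val_injective p hv.symm)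
        simp [Polynomial.coeff_C_mul, Polynomial.coeff_X_pow, hv]
      · simp
    have haev : Polynomial.aeval (omegaC p) Q = 0 := by
      rw [hQdef, map_sum]
      simp only [map_mul, map_pow, Polynomial.aeval_C, Polynomial.aeval_X, map_natCast]
      exact hsum
    have hdvd : Polynomial.cyclotomic p ℚ ∣ Q := by
      rw [Polynomial.cyclotomic_eq_minpoly_rat hprim hp.out.pos]
      exact minpoly.dvd ℚ _ haev
    obtain ⟨r, hr⟩ := hdvd
    have hcyc_ne : Polynomial.cyclotomic p ℚ ≠ 0 := Polynomial.cyclotomic_ne_zero p ℚ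
    have hcoeff_cyc : ∀ t : ZMod p, (Polynomial.cyclotomic p ℚ).coeff t.val = 1 := by
      intro t
      rw [Polynomial.cyclotomic_prime, Polynomial.finset_sum_coeff]
      simp only [Polynomial.coeff_X_pow]
      rw [Finset.sum_ite_eq (Finset.range p) t.val (fun _ => (1 : ℚ))]
      simp [ZMod.val_lt t]
    by_cases hrz : r = 0
    · have hQ0 : Q = 0 := by rw [hr, hrz, mul_zero]
      intro t
      have h1 := hcoeff t; have h2 := hcoeff 0
      rw [hQ0] at h1 h2
      simp only [Polynomial.coeff_zero] at h1 h2
      exact_mod_cast h1.symm.trans h2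
    · have hdegQ : Q.natDegree ≤ p - 1 := by
        refine Polynomial.natDegree_le_iff_degree_le.mpr ?_
        rw [hQdef]
        refine (Polynomial.degree_sum_le _ _).trans ?_
        refine Finset.sup_le fun t _ => ?_
        refine (Polynomial.degree_C_mul_X_pow_le _ _).trans ?_
        exact_mod_cast Nat.cast_le.mpr (Nat.le_sub_one_of_lt (ZMod.val_lt t))
      have hQne : Q ≠ 0 := by
        rw [hr]; exact mul_ne_zero hcyc_ne hrz
      have hnd : Q.natDegree = (Polynomial.cyclotomic p ℚ).natDegree + r.natDegree := by
        rw [hr]; exact Polynomial.natDegree_mul hcyc_ne hrz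
      have hndcyc : (Polynomial.cyclotomic p ℚ).natDegree = p - 1 := by
        rw [Polynomial.natDegree_cyclotomic, Nat.totient_prime hp.out]
      have hrd : r.natDegree = 0 := by
        rw [hndcyc] at hnd
        have := hp.out.pos
        omega
      obtain ⟨r0, hr0⟩ : ∃ a, r = Polynomial.C a :=
        ⟨r.coeff 0, Polynomial.eq_C_of_natDegree_eq_zero hrd⟩
    
      have hct : ∀ t : ZMod p, (c t : ℚ) = r0 := by
        intro t
        rw [← hcoeff t, hr, hr0, mul_comm, Polynomial.coeff_C_mul, hcoeff_cyc t, mul_one]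
      intro t
      have := (hct t).trans (hct 0).symm
      exact_mod_cast this
  · intro hconst
    have h1 : ∑ t : ZMod p, (c t : ℂ) * omegaC p ^ (t.val)
        = (c 0 : ℂ) * ∑ t : ZMod p, omegaC p ^ (t.val) := by
      rw [Finset.mul_sum]
      exact Finset.sum_congr rfl fun t _ => by rw [hconst t]
    rw [h1, zmod_sum_val (fun i => omegaC p ^ i), hprim.geom_sum_eq_zero hp.out.one_lt, mul_zero]

end AuxLemmas

/-- `z^{p^m} - 1 ∣ F(z)` iff `f` is balanced on every fiber obtained by fixing the
first `m` variables: for every `(a₁,…,a_m)` and every `t`,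
`#{x : f x = t ∧ xᵢ = aᵢ for 1 ≤ i ≤ m} = p^{n-m-1}`. -/
theorem pow_sub_one_dvd_assocPoly_iff_balanced_fibers
    (p n m : ℕ) [Fact p.Prime] (hn : 0 < n) (hm : 1 ≤ m) (hmn : m ≤ n - 1)
    (f : (Fin n → ZMod p) → ZMod p) :
    (Polynomial.X ^ (p ^ m) - 1 : Polynomial ℂ) ∣ assocPoly f ↔
      ∀ a : Fin m → ZMod p, ∀ t : ZMod p,
        (Finset.univ.filter fun x : Fin n → ZMod p =>
            f x = t ∧ ∀ i : Fin m, x (Fin.castLE (by omega) i) = a i).card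
          = p ^ (n - m - 1) := by
  classical
  have hp : p.Prime := Fact.out
  haveI : NeZero p := ⟨hp.ne_zero⟩
  have hmn' : m ≤ n := by omega
  set S : (Fin m → ZMod p) → ℂ := fun a => ∑ x ∈ Finset.univ.filter
      (fun x : Fin n → ZMod p => ∀ i : Fin m, x (Fin.castLE hmn' i) = a i),
      omegaC p ^ (f x).val with hS
  set G : Polynomial ℂ := ∑ a : Fin m → ZMod p, Polynomial.monomial (idx a) (S a) with hG
  -- Step A
  have hFG : (Polynomial.X ^ (p ^ m) - 1 : Polynomial ℂ) ∣ assocPoly f - G := by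
    have hGalt : G = ∑ x : Fin n → ZMod p,
        Polynomial.monomial (idx (fun i : Fin m => x (Fin.castLE hmn' i)))
          (omegaC p ^ (f x).val) := by
      rw [hG, ← Finset.sum_fiberwise Finset.univ
        (fun x : Fin n → ZMod p => fun i : Fin m => x (Fin.castLE hmn' i))
        (fun x : Fin n → ZMod p => Polynomial.monomial
          (idx (fun i : Fin m => x (Fin.castLE hmn' i))) (omegaC p ^ (f x).val))]
      refine Finset.sum_congr rfl fun a _ => ?_
      rw [hS, map_sum]
      refine Finset.sum_congr (Finset.filter_congr fun x _ => ?_) fun x hx => ?_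
      · simp [funext_iff]
      · simp only [Finset.mem_filter] at hx
        rw [hx.2]
    rw [hGalt]
    unfold assocPoly
    rw [← Finset.sum_sub_distrib]
    apply Finset.dvd_sum
    intro x _
    obtain ⟨c, hc⟩ := idx_split hmn' x
    rw [← Polynomial.C_mul_X_pow_eq_monomial, ← Polynomial.C_mul_X_pow_eq_monomial, ← mul_sub]
    apply Dvd.dvd.mul_left
    have hxp : (Polynomial.X : Polynomial ℂ) ^ (idx x)
        - Polynomial.X ^ (idx fun i : Fin m => x (Fin.castLE hmn' i))
        = Polynomial.X ^ (idx fun i : Fin m => x (Fin.castLE hmn' i))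
          * ((Polynomial.X ^ (p ^ m)) ^ c - 1) := by
      rw [mul_sub, mul_one, ← pow_mul, ← pow_add, ← hc]
    rw [hxp]
    have hdv : (Polynomial.X ^ (p ^ m) - 1 : Polynomial ℂ) ∣ (Polynomial.X ^ (p ^ m)) ^ c - 1 := by
      simpa using sub_dvd_pow_sub_pow ((Polynomial.X : Polynomial ℂ) ^ (p ^ m)) 1 c
    exact Dvd.dvd.mul_left hdv _
  have key1 : ((Polynomial.X ^ (p ^ m) - 1 : Polynomial ℂ) ∣ assocPoly f) ↔
      (Polynomial.X ^ (p ^ m) - 1 : Polynomial ℂ) ∣ G := by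
    constructor
    · intro h; simpa using dvd_sub h hFG
    · intro h; simpa using dvd_add h hFG
  -- Step B
  have hNpos : 0 < p ^ m := pow_pos hp.pos m
  have key2 : ((Polynomial.X ^ (p ^ m) - 1 : Polynomial ℂ) ∣ G) ↔ G = 0 := by
    constructor
    · intro h
      refine Polynomial.eq_zero_of_dvd_of_degree_lt h ?_
      have h1 : (Polynomial.X ^ (p ^ m) - 1 : Polynomial ℂ).degree = (p ^ m : ℕ) := by
        simpa using Polynomial.degree_X_pow_sub_C hNpos (1 : ℂ)
      rw [h1, hG]
      refine lt_of_le_of_lt (Polynomial.degree_sum_le _ _) ?_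
      rw [Finset.sup_lt_iff (by exact_mod_cast WithBot.bot_lt_coe (p ^ m))]
      intro a _
      refine lt_of_le_of_lt (Polynomial.degree_monomial_le _ _) ?_
      exact_mod_cast idx_lt a
    · intro h; rw [h]; exact dvd_zero _
  -- Step C
  have key3 : G = 0 ↔ ∀ a : Fin m → ZMod p, S a = 0 := by
    constructor
    · intro h a
      have hco : G.coeff (idx a) = S a := by
        rw [hG, Polynomial.finset_sum_coeff, Finset.sum_eq_single a]
        · simp [Polynomial.coeff_monomial]
        · intro b _ hba
          rw [Polynomial.coeff_monomial, if_neg (fun he => hba (idx_inj b a he))]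
        · simp
      rw [h] at hco
      simpa using hco.symm
    · intro h; rw [hG]; exact Finset.sum_eq_zero fun a _ => by rw [h a]; simp
  -- Step D
  have key4 : ∀ a : Fin m → ZMod p, (S a = 0 ↔ ∀ t : ZMod p,
      (Finset.univ.filter fun x : Fin n → ZMod p =>
        f x = t ∧ ∀ i : Fin m, x (Fin.castLE hmn' i) = a i).card = p ^ (n - m - 1)) := by
    intro a
    set c : ZMod p → ℕ := fun t => (Finset.univ.filter fun x : Fin n → ZMod p =>
        f x = t ∧ ∀ i : Fin m, x (Fin.castLE hmn' i) = a i).card with hcdef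
    have hSsum : S a = ∑ t : ZMod p, (c t : ℂ) * omegaC p ^ (t.val) := by
      have hfib := Finset.sum_fiberwise (Finset.univ.filter fun x : Fin n → ZMod p =>
        ∀ i : Fin m, x (Fin.castLE hmn' i) = a i) f (fun x => omegaC p ^ (f x).val)
      rw [show S a = ∑ x ∈ Finset.univ.filter (fun x : Fin n → ZMod p =>
          ∀ i : Fin m, x (Fin.castLE hmn' i) = a i), omegaC p ^ (f x).val from rfl, ← hfib]
      refine Finset.sum_congr rfl fun t _ => ?_
      rw [Finset.filter_filter]
      have hfc : (Finset.univ.filter fun x : Fin n → ZMod p =>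
          (∀ i : Fin m, x (Fin.castLE hmn' i) = a i) ∧ f x = t)
          = Finset.univ.filter fun x : Fin n → ZMod p =>
            f x = t ∧ ∀ i : Fin m, x (Fin.castLE hmn' i) = a i :=
        Finset.filter_congr fun x _ => by tauto
      rw [hfc]
      have hcw : ∀ x ∈ Finset.univ.filter (fun x : Fin n → ZMod p =>
          f x = t ∧ ∀ i : Fin m, x (Fin.castLE hmn' i) = a i),
          omegaC p ^ (f x).val = omegaC p ^ t.val := by
        intro x hx
        simp only [Finset.mem_filter] at hx
        rw [hx.2.1]
      rw [Finset.sum_congr rfl hcw, Finset.sum_const, nsmul_eq_mul]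
    have hsum_c : ∑ t : ZMod p, c t = p ^ (n - m) := by
      rw [← fiber_card hmn' a,
        Finset.card_eq_sum_card_fiberwise (f := f) (t := Finset.univ)
          (fun x _ => Finset.mem_univ (f x))]
      refine Finset.sum_congr rfl fun t _ => ?_
      rw [Finset.filter_filter]
      exact congrArg Finset.card (Finset.filter_congr fun x _ => by tauto).symm
    constructor
    · intro hS0
      have hconst := (sum_omega_eq_zero_iff p c).mp (by rw [← hSsum]; exact hS0)
      have hmul : p * c 0 = p ^ (n - m) := by
        rw [← hsum_c, Finset.sum_congr rfl (fun t _ => hconst t), Finset.sum_const,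
          Finset.card_univ, ZMod.card, smul_eq_mul]
      intro t
      show c t = p ^ (n - m - 1)
      rw [hconst t]
      have hpow : p ^ (n - m) = p * p ^ (n - m - 1) := by
        rw [← pow_succ']
        congr 1
        omega
      rw [hpow] at hmul
      exact Nat.eq_of_mul_eq_mul_left hp.pos hmul
    · intro hcount
      rw [hSsum]
      exact (sum_omega_eq_zero_iff p c).mpr fun t => (hcount t).trans (hcount 0).symm
  rw [key1, key2, key3]
  exact ⟨fun h a t => ((key4 a).mp (h a)) t, fun h a => (key4 a).mpr (fun t => h a t)⟩
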